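/- Let K = ⋃_{ℓ=1}^L [a_ℓ, b_ℓ] ⊆ [−1,1] with −1 = a_1 < b_1 < a_2 < ⋯ < a_L < b_L = 1, let w be continuous and strictly positive on K, and let N ≥ 1. Let d ≥ N, let V_d be any monic polynomial of degree N minimizing sslash · sslash_d among monic polynomials of degree N, and let U be any monic polynomial of degree N minimizing ‖P/w‖_{L1(K)} among monic polynomials of degree N. Then sslash V_d sslash_d ≤ ‖U/w‖_{L1(K)} ≤ ‖V_d/w‖_{L1(K)}. -/

import Mathlib

open MeasureTheory Filter Polynomial

/-- The `(d+1) × (d+1)` symmetric Toeplitz matrix built from a vector `y ∈ ℝ^{d+1}`,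
with entries `y_{|i−j|}`. -/
noncomputable def toepFin (d : ℕ) (y : Fin (d + 1) → ℝ) :
    Matrix (Fin (d + 1)) (Fin (d + 1)) ℝ :=
  fun i j => y ⟨(((i : ℕ) : ℤ) - ((j : ℕ) : ℤ)).natAbs, by omega⟩

/-- The transplantation `P_ℓ(x) = P(((bℓ−aℓ)x + aℓ + bℓ)/2)` of a polynomial
from `[aℓ, bℓ]` to `[-1, 1]`. -/
noncomputable def transplant (aℓ bℓ : ℝ) (P : Polynomial ℝ) : Polynomial ℝ :=
  P.comp (Polynomial.C ((bℓ - aℓ) / 2) * Polynomial.X + Polynomial.C ((aℓ + bℓ) / 2))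

/-- The entries `J^ℓ_{k,n} = ∫_0^π cos(kθ) sin((n+1)θ) / w_ℓ(cos θ) dθ`, where
`w_ℓ(x) = w(((bℓ−aℓ)x + aℓ + bℓ)/2)` is the transplantation of the weight `w`. -/
noncomputable def Jent (aℓ bℓ : ℝ) (w : ℝ → ℝ) (k n : ℕ) : ℝ :=
  ∫ θ in (0:ℝ)..Real.pi,
    Real.cos (k * θ) * Real.sin ((n + 1) * θ) /
      w (((bℓ - aℓ) * Real.cos θ + aℓ + bℓ) / 2)

/-- The weighted `L1` norm `‖P/w‖_{L1(K)} = ∑_ℓ ∫_{a_ℓ}^{b_ℓ} |P(t)|/w(t) dt`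
on `K = ⋃_{ℓ<L} [a ℓ, b ℓ]`. -/
noncomputable def L1K (L : ℕ) (a b : ℕ → ℝ) (w : ℝ → ℝ) (P : Polynomial ℝ) : ℝ :=
  ∑ ℓ ∈ Finset.range L, ∫ t in (a ℓ)..(b ℓ), |P.eval t| / w t

/-- The ersatz norm `⫽P⫽_d`: the infimum of
`∑_ℓ ((b_ℓ−a_ℓ)/2)(y^{ℓ,+}_0 + y^{ℓ,−}_0)` over vectors `y^{ℓ,±} ∈ ℝ^{d+1}` with
`y^{ℓ,+} − y^{ℓ,−} = J^{ℓ,d} W^ℓ p` and `Toep_d(y^{ℓ,±}) ⪰ 0`, where `q ℓ = W^ℓ p` is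
the vector of second-kind Chebyshev coefficients of the transplantation `P_ℓ`. -/
noncomputable def ersatz (L N d : ℕ) (a b : ℕ → ℝ) (w : ℝ → ℝ) (P : Polynomial ℝ) : ℝ :=
  sInf { s : ℝ |
    ∃ q : ℕ → Fin (N + 1) → ℝ,
      (∀ ℓ < L, transplant (a ℓ) (b ℓ) P
          = ∑ n : Fin (N + 1), Polynomial.C (q ℓ n) * Polynomial.Chebyshev.U ℝ ((n : ℕ) : ℤ)) ∧
      ∃ yp ym : ℕ → Fin (d + 1) → ℝ,
        (∀ ℓ < L, ∀ k : Fin (d + 1),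
            yp ℓ k - ym ℓ k
              = ∑ n : Fin (N + 1), Jent (a ℓ) (b ℓ) w (k : ℕ) (n : ℕ) * q ℓ n) ∧
        (∀ ℓ < L, (toepFin d (yp ℓ)).PosSemidef ∧ (toepFin d (ym ℓ)).PosSemidef) ∧
        s = ∑ ℓ ∈ Finset.range L, ((b ℓ - a ℓ) / 2) * (yp ℓ 0 + ym ℓ 0) }


section Helpers
open MeasureTheory Real Matrix
lemma chebU_deg_coeff : ∀ n : ℕ, (Polynomial.Chebyshev.U ℝ (n:ℤ)).natDegree ≤ n ∧
    (Polynomial.Chebyshev.U ℝ (n:ℤ)).coeff n = 2 ^ n := by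
  intro n
  induction n using Nat.strong_induction_on with
  | _ n ih =>
    match n with
    | 0 => simp [Polynomial.Chebyshev.U_zero]
    | 1 =>
      constructor
      · simpa [Polynomial.Chebyshev.U_one] using Polynomial.natDegree_linear_le (a := (2:ℝ)) (b := 0)
      · simp [Polynomial.Chebyshev.U_one, Polynomial.coeff_X, mul_comm]
    | (m+2) =>
      have h1 := ih (m+1) (by omega)
      have h0 := ih m (by omega)
      have hrec : Polynomial.Chebyshev.U ℝ ((m+2 : ℕ) : ℤ)
          = 2 * X * Polynomial.Chebyshev.U ℝ ((m+1 : ℕ) : ℤ) - Polynomial.Chebyshev.U ℝ (m : ℤ) := by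
        push_cast
        exact Polynomial.Chebyshev.U_add_two ℝ m
      constructor
      · rw [hrec]
        refine le_trans (Polynomial.natDegree_sub_le _ _) ?_
        refine max_le (le_trans (Polynomial.natDegree_mul_le) ?_) (by omega)
        have : (2 * X : ℝ[X]).natDegree ≤ 1 := by
          simpa using Polynomial.natDegree_linear_le (a := (2:ℝ)) (b := 0)
        omega
      · rw [hrec]
        rw [Polynomial.coeff_sub, Polynomial.coeff_eq_zero_of_natDegree_lt (lt_of_le_of_lt h0.1 (by omega))]
        rw [mul_assoc, Polynomial.coeff_ofNat_mul, Polynomial.coeff_X_mul, h1.2]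
        ring

lemma cheb_expand : ∀ (N : ℕ) (P : ℝ[X]), P.natDegree ≤ N →
    ∃ q : Fin (N+1) → ℝ, P = ∑ n : Fin (N+1), Polynomial.C (q n) * Polynomial.Chebyshev.U ℝ ((n : ℕ) : ℤ) := by
  intro N
  induction N with
  | zero =>
    intro P hP
    refine ⟨fun _ => P.coeff 0, ?_⟩
    rw [Polynomial.eq_C_of_natDegree_le_zero hP]
    simp [Polynomial.Chebyshev.U_zero]
  | succ N ih =>
    intro P hP
    set c : ℝ := P.coeff (N+1) / 2 ^ (N+1) with hc
    set P' : ℝ[X] := P - Polynomial.C c * Polynomial.Chebyshev.U ℝ ((N+1 : ℕ) : ℤ) with hP'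
    have hdeg : P'.natDegree ≤ N := by
      rw [Polynomial.natDegree_le_iff_coeff_eq_zero]
      intro m hm
      rcases eq_or_lt_of_le (Nat.succ_le_of_lt hm) with h | h
      · rw [hP', Polynomial.coeff_sub, Polynomial.coeff_C_mul, ← h, (chebU_deg_coeff (N+1)).2, hc]
        field_simp
        ring
      · have h1 : P.natDegree < m := by omega
        have h2 : (Polynomial.C c * Polynomial.Chebyshev.U ℝ ((N+1 : ℕ) : ℤ)).natDegree < m := by
          refine lt_of_le_of_lt (Polynomial.natDegree_mul_le) ?_
          have := (chebU_deg_coeff (N+1)).1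
          simp only [Polynomial.natDegree_C]
          omega
        rw [hP', Polynomial.coeff_sub, Polynomial.coeff_eq_zero_of_natDegree_lt h1,
          Polynomial.coeff_eq_zero_of_natDegree_lt h2, sub_zero]
    obtain ⟨q', hq'⟩ := ih P' hdeg
    refine ⟨Fin.snoc q' c, ?_⟩
    rw [Fin.sum_univ_castSucc]
    have hl : ∀ i : Fin (N+1), (Fin.snoc q' c : Fin (N+2) → ℝ) i.castSucc = q' i := fun i => Fin.snoc_castSucc _ _ _
    have : ∑ i : Fin (N+1), Polynomial.C ((Fin.snoc q' c : Fin (N+2) → ℝ) i.castSucc)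
        * Polynomial.Chebyshev.U ℝ ((i.castSucc : ℕ) : ℤ)
        = ∑ i : Fin (N+1), Polynomial.C (q' i) * Polynomial.Chebyshev.U ℝ ((i : ℕ) : ℤ) := by
      refine Finset.sum_congr rfl fun i _ => by rw [hl i]; rfl
    rw [this, ← hq', Fin.snoc_last]
    simp only [Fin.val_last]
    rw [hP']
    ring

lemma cos_subst (G : ℝ → ℝ) (hG : ContinuousOn G (Set.Icc (-1) 1)) :
    ∫ θ in (0:ℝ)..π, G (Real.cos θ) * Real.sin θ = ∫ x in (-1:ℝ)..1, G x := by
  have h := intervalIntegral.integral_comp_mul_deriv' (a := 0) (b := π)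
    (f := Real.cos) (f' := fun x => -Real.sin x) (g := G)
    (fun x _ => Real.hasDerivAt_cos x) (Continuous.continuousOn (by fun_prop))
    (hG.mono (by
      rintro y ⟨x, _, rfl⟩
      exact ⟨Real.neg_one_le_cos x, Real.cos_le_one x⟩))
  simp only [Function.comp] at h
  rw [Real.cos_zero, Real.cos_pi] at h
  have h2 : (∫ x in (0:ℝ)..π, G (Real.cos x) * -Real.sin x)
      = -∫ x in (0:ℝ)..π, G (Real.cos x) * Real.sin x := by
    rw [← intervalIntegral.integral_neg]
    congr 1; funext x; ring
  rw [h2] at h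
  have h4 : (∫ x in (1:ℝ)..(-1:ℝ), G x) = -∫ x in (-1:ℝ)..1, G x :=
    intervalIntegral.integral_symm _ _
  rw [h4] at h
  linarith

lemma affine_subst (α β : ℝ) (hαβ : α < β) (h : ℝ → ℝ) :
    ∫ x in (-1:ℝ)..1, h (((β - α) * x + α + β)/2) = (2/(β - α)) * ∫ t in α..β, h t := by
  have hc : (β - α)/2 ≠ 0 := by intro hh; apply absurd hαβ; intro _; linarith [hh]
  have hfun : (fun x => h (((β - α) * x + α + β)/2))
      = fun x => h ((β - α)/2 * x + (α + β)/2) := by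
    funext x; congr 1; ring
  rw [hfun, intervalIntegral.integral_comp_mul_add h hc ((α + β)/2)]
  rw [show (β - α)/2 * (-1) + (α + β)/2 = α from by ring,
    show (β - α)/2 * 1 + (α + β)/2 = β from by ring, smul_eq_mul]
  congr 1
  field_simp

lemma toep_psd (d : ℕ) (g : ℝ → ℝ) (hg : ContinuousOn g (Set.uIcc 0 π))
    (hpos : ∀ θ ∈ Set.uIcc 0 π, 0 ≤ g θ) :
    (toepFin d (fun k => ∫ θ in (0:ℝ)..π, Real.cos ((k : ℕ) * θ) * g θ)).PosSemidef := by
  have hI : ∀ (c : ℝ → ℝ), Continuous c →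
      IntervalIntegrable (fun θ => c θ * g θ) volume 0 π :=
    fun c hc => (hc.continuousOn.mul hg).intervalIntegrable
  set M := toepFin d (fun k => ∫ θ in (0:ℝ)..π, Real.cos ((k : ℕ) * θ) * g θ) with hM
  have hent : ∀ i j : Fin (d+1), M i j
      = ∫ θ in (0:ℝ)..π, (Real.cos (i * θ) * Real.cos (j * θ)
          + Real.sin (i * θ) * Real.sin (j * θ)) * g θ := by
    intro i j
    show (∫ θ in (0:ℝ)..π, Real.cos (((((i:ℕ):ℤ) - ((j:ℕ):ℤ)).natAbs : ℝ) * θ) * g θ) = _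
    apply intervalIntegral.integral_congr
    intro θ _
    dsimp only
    have h1 : ((((i:ℕ):ℤ) - ((j:ℕ):ℤ)).natAbs : ℝ) = |((i:ℕ):ℝ) - ((j:ℕ):ℝ)| := by
      rw [Nat.cast_natAbs]; push_cast; ring_nf
    rw [h1]
    have h2 : Real.cos (|((i:ℕ):ℝ) - ((j:ℕ):ℝ)| * θ)
        = Real.cos ((((i:ℕ):ℝ) - ((j:ℕ):ℝ)) * θ) := by
      rcases abs_cases (((i:ℕ):ℝ) - ((j:ℕ):ℝ)) with ⟨hh, _⟩ | ⟨hh, _⟩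
      · rw [hh]
      · rw [hh, neg_mul, Real.cos_neg]
    rw [h2, sub_mul, Real.cos_sub]
  rw [Matrix.posSemidef_iff_dotProduct_mulVec]
  constructor
  · show M.conjTranspose = M
    ext i j
    show (starRingEnd ℝ) (M j i) = M i j
    rw [starRingEnd_apply, star_trivial, hM]
    show (fun k : Fin (d+1) => ∫ θ in (0:ℝ)..π, Real.cos ((k : ℕ) * θ) * g θ) _ = _
    congr 1
    exact Fin.ext (by simp only []; omega)
  · intro x
    rw [star_trivial]
    set A : ℝ → ℝ := fun θ => ∑ i : Fin (d+1), x i * Real.cos (i * θ) with hA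
    set B : ℝ → ℝ := fun θ => ∑ i : Fin (d+1), x i * Real.sin (i * θ) with hB
    have key : dotProduct x (M *ᵥ x) = ∫ θ in (0:ℝ)..π, (A θ^2 + B θ^2) * g θ := by
      have h1 : ∀ i j : Fin (d+1), x i * (M i j * x j)
          = ∫ θ in (0:ℝ)..π, ((x i * x j) * (Real.cos (i * θ) * Real.cos (j * θ)
              + Real.sin (i * θ) * Real.sin (j * θ))) * g θ := by
        intro i j
        rw [hent i j, show x i * ((∫ θ in (0:ℝ)..π, (Real.cos (i * θ) * Real.cos (j * θ)
              + Real.sin (i * θ) * Real.sin (j * θ)) * g θ) * x j)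
            = (x i * x j) * ∫ θ in (0:ℝ)..π, (Real.cos (i * θ) * Real.cos (j * θ)
              + Real.sin (i * θ) * Real.sin (j * θ)) * g θ from by ring,
          ← intervalIntegral.integral_const_mul]
        congr 1; funext θ; ring
      have h2 : dotProduct x (M *ᵥ x) = ∑ i : Fin (d+1), ∑ j : Fin (d+1), x i * (M i j * x j) := by
        simp only [dotProduct, Matrix.mulVec, Finset.mul_sum]
      rw [h2]
      have h3 : ∀ i : Fin (d+1), ∑ j : Fin (d+1), x i * (M i j * x j)
          = ∫ θ in (0:ℝ)..π, (∑ j : Fin (d+1), (x i * x j) * (Real.cos (i * θ) * Real.cos (j * θ)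
              + Real.sin (i * θ) * Real.sin (j * θ))) * g θ := by
        intro i
        rw [show (fun θ => (∑ j : Fin (d+1), (x i * x j) * (Real.cos (i * θ) * Real.cos (j * θ)
              + Real.sin (i * θ) * Real.sin (j * θ))) * g θ)
            = fun θ => ∑ j : Fin (d+1), ((x i * x j) * (Real.cos (i * θ) * Real.cos (j * θ)
              + Real.sin (i * θ) * Real.sin (j * θ))) * g θ from by
          funext θ; rw [Finset.sum_mul]]
        rw [intervalIntegral.integral_finset_sum]
        · exact Finset.sum_congr rfl fun j _ => h1 i j
        · intro j _
          exact hI _ (by fun_prop)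
      rw [Finset.sum_congr rfl fun i _ => h3 i]
      rw [← intervalIntegral.integral_finset_sum (fun i _ => hI _ (by fun_prop))]
      apply intervalIntegral.integral_congr
      intro θ _
      dsimp only
      rw [← Finset.sum_mul]
      congr 1
      rw [hA, hB]
      simp only [pow_two]
      rw [Finset.sum_mul_sum, Finset.sum_mul_sum, ← Finset.sum_add_distrib]
      refine Finset.sum_congr rfl fun i _ => ?_
      rw [← Finset.sum_add_distrib]
      refine Finset.sum_congr rfl fun j _ => by ring
    rw [key]
    apply intervalIntegral.integral_nonneg Real.pi_pos.le
    intro θ hθ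
    exact mul_nonneg (by positivity) (hpos θ (by rw [Set.uIcc_of_le Real.pi_pos.le]; exact hθ))

lemma toep_diag_nonneg {d : ℕ} {y : Fin (d+1) → ℝ} (h : (toepFin d y).PosSemidef) : 0 ≤ y 0 := by
  have h2 := (Matrix.posSemidef_iff_dotProduct_mulVec.1 h).2 (Pi.single 0 1)
  have : dotProduct (star (Pi.single 0 1 : Fin (d+1) → ℝ))
      ((toepFin d y).mulVec (Pi.single 0 1)) = y 0 := by
    simp [dotProduct, Matrix.mulVec, Pi.single_apply, toepFin]
  linarith [this ▸ h2]

lemma ersatz_le_L1K (L : ℕ) (a b : ℕ → ℝ) (hab : ∀ ℓ < L, a ℓ < b ℓ)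
    (w : ℝ → ℝ)
    (hw : ContinuousOn w (⋃ ℓ ∈ Finset.range L, Set.Icc (a ℓ) (b ℓ)))
    (hwpos : ∀ x ∈ ⋃ ℓ ∈ Finset.range L, Set.Icc (a ℓ) (b ℓ), 0 < w x)
    (N d : ℕ) (P : Polynomial ℝ) (hPdeg : P.natDegree ≤ N) :
    ersatz L N d a b w P ≤ L1K L a b w P := by
  classical
  -- basic data
  set Pl : ℕ → ℝ[X] := fun ℓ => transplant (a ℓ) (b ℓ) P with hPl
  set wl : ℕ → ℝ → ℝ := fun ℓ x => w (((b ℓ - a ℓ) * x + a ℓ + b ℓ)/2) with hwl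
  set F : ℕ → ℝ → ℝ := fun ℓ θ => (Pl ℓ).eval (Real.cos θ) * Real.sin θ / wl ℓ (Real.cos θ)
    with hF
  have hPl_deg : ∀ ℓ, (Pl ℓ).natDegree ≤ N := by
    intro ℓ
    rw [hPl]
    simp only [transplant]
    rw [Polynomial.natDegree_comp]
    calc P.natDegree * (Polynomial.C ((b ℓ - a ℓ)/2) * Polynomial.X
          + Polynomial.C ((a ℓ + b ℓ)/2)).natDegree
        ≤ N * 1 := Nat.mul_le_mul hPdeg (Polynomial.natDegree_linear_le)
      _ = N := by ring
  set q : ℕ → Fin (N+1) → ℝ := fun ℓ => (cheb_expand N (Pl ℓ) (hPl_deg ℓ)).choose with hqdef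
  have hq : ∀ ℓ, Pl ℓ = ∑ n : Fin (N+1), Polynomial.C (q ℓ n)
      * Polynomial.Chebyshev.U ℝ ((n : ℕ) : ℤ) :=
    fun ℓ => (cheb_expand N (Pl ℓ) (hPl_deg ℓ)).choose_spec
  set yp : ℕ → Fin (d+1) → ℝ :=
    fun ℓ k => ∫ θ in (0:ℝ)..π, Real.cos ((k : ℕ) * θ) * max (F ℓ θ) 0 with hyp
  set ym : ℕ → Fin (d+1) → ℝ :=
    fun ℓ k => ∫ θ in (0:ℝ)..π, Real.cos ((k : ℕ) * θ) * max (-(F ℓ θ)) 0 with hym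
  -- per-ℓ analytic facts
  have hsub : ∀ ℓ < L, Set.Icc (a ℓ) (b ℓ) ⊆ ⋃ ℓ ∈ Finset.range L, Set.Icc (a ℓ) (b ℓ) := by
    intro ℓ hℓ x hx
    exact Set.mem_biUnion (Finset.mem_range.2 hℓ) hx
  have hmap : ∀ ℓ < L, ∀ x ∈ Set.Icc (-1:ℝ) 1,
      ((b ℓ - a ℓ) * x + a ℓ + b ℓ)/2 ∈ Set.Icc (a ℓ) (b ℓ) := by
    intro ℓ hℓ x hx
    have h1 := hx.1; have h2 := hx.2; have h3 := hab ℓ hℓ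
    constructor <;> nlinarith
  have hwl_cont : ∀ ℓ < L, ContinuousOn (wl ℓ) (Set.Icc (-1:ℝ) 1) := by
    intro ℓ hℓ
    exact ContinuousOn.comp hw (Continuous.continuousOn (by fun_prop))
      (fun x hx => hsub ℓ hℓ (hmap ℓ hℓ x hx))
  have hwl_pos : ∀ ℓ < L, ∀ x ∈ Set.Icc (-1:ℝ) 1, 0 < wl ℓ x :=
    fun ℓ hℓ x hx => hwpos _ (hsub ℓ hℓ (hmap ℓ hℓ x hx))
  have hcos_mem : ∀ θ : ℝ, Real.cos θ ∈ Set.Icc (-1:ℝ) 1 :=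
    fun θ => ⟨Real.neg_one_le_cos θ, Real.cos_le_one θ⟩
  have hD_cont : ∀ ℓ < L, ContinuousOn (fun θ => wl ℓ (Real.cos θ)) (Set.uIcc 0 π) := by
    intro ℓ hℓ
    exact ContinuousOn.comp (g := wl ℓ) (f := Real.cos) (t := Set.Icc (-1) 1)
      (hwl_cont ℓ hℓ) Real.continuous_cos.continuousOn (fun θ _ => hcos_mem θ)
  have hD_pos : ∀ ℓ < L, ∀ θ : ℝ, 0 < wl ℓ (Real.cos θ) :=
    fun ℓ hℓ θ => hwl_pos ℓ hℓ _ (hcos_mem θ)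
  have hF_cont : ∀ ℓ < L, ContinuousOn (F ℓ) (Set.uIcc 0 π) := by
    intro ℓ hℓ
    exact ContinuousOn.div (Continuous.continuousOn (by fun_prop)) (hD_cont ℓ hℓ)
      (fun θ _ => (hD_pos ℓ hℓ θ).ne')
  have hFp_cont : ∀ ℓ < L, ContinuousOn (fun θ => max (F ℓ θ) 0) (Set.uIcc 0 π) :=
    fun ℓ hℓ => (hF_cont ℓ hℓ).sup continuousOn_const
  have hFm_cont : ∀ ℓ < L, ContinuousOn (fun θ => max (-(F ℓ θ)) 0) (Set.uIcc 0 π) :=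
    fun ℓ hℓ => ((hF_cont ℓ hℓ).neg).sup continuousOn_const
  -- (2) the moment identity
  have hmom : ∀ ℓ < L, ∀ k : Fin (d+1),
      yp ℓ k - ym ℓ k = ∑ n : Fin (N+1), Jent (a ℓ) (b ℓ) w (k : ℕ) (n : ℕ) * q ℓ n := by
    intro ℓ hℓ k
    have hIp : IntervalIntegrable (fun θ => Real.cos ((k:ℕ) * θ) * max (F ℓ θ) 0) volume 0 π :=
      (ContinuousOn.mul (Continuous.continuousOn (by fun_prop)) (hFp_cont ℓ hℓ)).intervalIntegrable
    have hIm : IntervalIntegrable (fun θ => Real.cos ((k:ℕ) * θ) * max (-(F ℓ θ)) 0) volume 0 π :=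
      (ContinuousOn.mul (Continuous.continuousOn (by fun_prop)) (hFm_cont ℓ hℓ)).intervalIntegrable
    have step1 : yp ℓ k - ym ℓ k = ∫ θ in (0:ℝ)..π, Real.cos ((k:ℕ) * θ) * F ℓ θ := by
      rw [hyp, hym]
      dsimp only
      rw [← intervalIntegral.integral_sub hIp hIm]
      congr 1; funext θ
      rw [← mul_sub, max_zero_sub_max_neg_zero_eq_self]
    rw [step1]
    -- pointwise expansion of the integrand
    have hpw : ∀ θ : ℝ, Real.cos ((k:ℕ) * θ) * F ℓ θ
        = ∑ n : Fin (N+1), (Real.cos ((k:ℕ) * θ) * Real.sin (((n:ℕ) + 1) * θ)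
            / wl ℓ (Real.cos θ)) * q ℓ n := by
      intro θ
      have heval : (Pl ℓ).eval (Real.cos θ) * Real.sin θ
          = ∑ n : Fin (N+1), q ℓ n * Real.sin (((n:ℕ) + 1) * θ) := by
        rw [hq ℓ]
        rw [Polynomial.eval_finset_sum, Finset.sum_mul]
        refine Finset.sum_congr rfl fun n _ => ?_
        rw [Polynomial.eval_mul, Polynomial.eval_C, mul_assoc,
          Polynomial.Chebyshev.U_real_cos θ ((n:ℕ) : ℤ)]
        norm_num
      rw [hF]
      dsimp only
      rw [heval, Finset.sum_div, Finset.mul_sum]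
      refine Finset.sum_congr rfl fun n _ => by ring
    rw [intervalIntegral.integral_congr (g := fun θ => ∑ n : Fin (N+1),
        (Real.cos ((k:ℕ) * θ) * Real.sin (((n:ℕ) + 1) * θ) / wl ℓ (Real.cos θ)) * q ℓ n)
      (fun θ _ => hpw θ)]
    rw [intervalIntegral.integral_finset_sum]
    · refine Finset.sum_congr rfl fun n _ => ?_
      rw [intervalIntegral.integral_mul_const, Jent]
    · intro n _
      apply ContinuousOn.intervalIntegrable
      exact (ContinuousOn.div (Continuous.continuousOn (by fun_prop)) (hD_cont ℓ hℓ)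
        (fun θ _ => (hD_pos ℓ hℓ θ).ne')).mul continuousOn_const
  -- (3) PSD
  have hpsd : ∀ ℓ < L, (toepFin d (yp ℓ)).PosSemidef ∧ (toepFin d (ym ℓ)).PosSemidef := by
    intro ℓ hℓ
    constructor
    · exact toep_psd d _ (hFp_cont ℓ hℓ) (fun θ _ => le_max_right _ _)
    · exact toep_psd d _ (hFm_cont ℓ hℓ) (fun θ _ => le_max_right _ _)
  -- (4) value
  have hval : L1K L a b w P = ∑ ℓ ∈ Finset.range L, ((b ℓ - a ℓ)/2) * (yp ℓ 0 + ym ℓ 0) := by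
    rw [L1K]
    refine Finset.sum_congr rfl fun ℓ hℓmem => ?_
    have hℓ : ℓ < L := Finset.mem_range.1 hℓmem
    have habs : yp ℓ 0 + ym ℓ 0 = ∫ θ in (0:ℝ)..π, |F ℓ θ| := by
      rw [hyp, hym]
      dsimp only
      rw [← intervalIntegral.integral_add
        (f := fun θ => Real.cos (((0 : Fin (d+1)) : ℕ) * θ) * max (F ℓ θ) 0)
        (g := fun θ => Real.cos (((0 : Fin (d+1)) : ℕ) * θ) * max (-(F ℓ θ)) 0)
        ((ContinuousOn.mul (Continuous.continuousOn (by fun_prop)) (hFp_cont ℓ hℓ)).intervalIntegrable :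
          IntervalIntegrable (fun θ => Real.cos (((0 : Fin (d+1)) : ℕ) * θ) * max (F ℓ θ) 0) volume 0 π)
        ((ContinuousOn.mul (Continuous.continuousOn (by fun_prop)) (hFm_cont ℓ hℓ)).intervalIntegrable :
          IntervalIntegrable (fun θ => Real.cos (((0 : Fin (d+1)) : ℕ) * θ) * max (-(F ℓ θ)) 0) volume 0 π)]
      apply intervalIntegral.integral_congr
      intro θ _
      dsimp only
      have : (((0 : Fin (d+1)) : ℕ) : ℝ) = 0 := by norm_num
      rw [this, zero_mul, Real.cos_zero, one_mul, one_mul,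
        max_zero_add_max_neg_zero_eq_abs_self]
    set G : ℝ → ℝ := fun x => |(Pl ℓ).eval x| / wl ℓ x with hG
    have hset : ∫ θ in (0:ℝ)..π, |F ℓ θ| = ∫ θ in (0:ℝ)..π, G (Real.cos θ) * Real.sin θ := by
      apply intervalIntegral.integral_congr
      intro θ hθ
      rw [Set.uIcc_of_le Real.pi_pos.le] at hθ
      have hs : 0 ≤ Real.sin θ := Real.sin_nonneg_of_nonneg_of_le_pi hθ.1 hθ.2
      have hwp : 0 < wl ℓ (Real.cos θ) := hD_pos ℓ hℓ θ
      rw [hF, hG]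
      dsimp only
      rw [abs_div, abs_mul, abs_of_nonneg hs, abs_of_pos hwp]
      ring
    have hGcont : ContinuousOn G (Set.Icc (-1:ℝ) 1) := by
      rw [hG]
      exact ContinuousOn.div (Continuous.continuousOn (by fun_prop)) (hwl_cont ℓ hℓ)
        (fun x hx => (hwl_pos ℓ hℓ x hx).ne')
    have hGh : G = fun x => (fun t => |P.eval t| / w t) (((b ℓ - a ℓ) * x + a ℓ + b ℓ)/2) := by
      funext x
      rw [hG, hPl]
      dsimp only
      congr 2
      simp only [transplant, Polynomial.eval_comp, Polynomial.eval_add, Polynomial.eval_mul,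
        Polynomial.eval_C, Polynomial.eval_X]
      congr 1
      ring
    have := affine_subst (a ℓ) (b ℓ) (hab ℓ hℓ) (fun t => |P.eval t| / w t)
    rw [habs, hset, cos_subst G hGcont, hGh]
    rw [this]
    have hne : b ℓ - a ℓ ≠ 0 := by have := hab ℓ hℓ; intro hc; linarith
    field_simp
  -- bddBelow
  have hbdd : BddBelow { s : ℝ |
    ∃ q : ℕ → Fin (N + 1) → ℝ,
      (∀ ℓ < L, transplant (a ℓ) (b ℓ) P
          = ∑ n : Fin (N + 1), Polynomial.C (q ℓ n) * Polynomial.Chebyshev.U ℝ ((n : ℕ) : ℤ)) ∧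
      ∃ yp ym : ℕ → Fin (d + 1) → ℝ,
        (∀ ℓ < L, ∀ k : Fin (d + 1),
            yp ℓ k - ym ℓ k
              = ∑ n : Fin (N + 1), Jent (a ℓ) (b ℓ) w (k : ℕ) (n : ℕ) * q ℓ n) ∧
        (∀ ℓ < L, (toepFin d (yp ℓ)).PosSemidef ∧ (toepFin d (ym ℓ)).PosSemidef) ∧
        s = ∑ ℓ ∈ Finset.range L, ((b ℓ - a ℓ) / 2) * (yp ℓ 0 + ym ℓ 0) } := by
    refine ⟨0, ?_⟩
    rintro s ⟨q', _, yp', ym', _, hpsd', rfl⟩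
    refine Finset.sum_nonneg fun ℓ hℓmem => ?_
    have hℓ : ℓ < L := Finset.mem_range.1 hℓmem
    have h1 := toep_diag_nonneg (hpsd' ℓ hℓ).1
    have h2 := toep_diag_nonneg (hpsd' ℓ hℓ).2
    have h3 := hab ℓ hℓ
    have : (0:ℝ) ≤ (b ℓ - a ℓ)/2 := by linarith
    positivity
  -- conclude
  rw [ersatz, hval]
  exact csInf_le hbdd ⟨q, fun ℓ _ => hq ℓ, yp, ym, hmom, hpsd,
    rfl⟩

end Helpers
/-- If `V` minimizes `⫽·⫽_d` (`d ≥ N`) and `U` minimizes `‖·/w‖_{L1(K)}` among monic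
polynomials of degree `N`, then `⫽V⫽_d ≤ ‖U/w‖_{L1(K)} ≤ ‖V/w‖_{L1(K)}`. -/
theorem ersatz_sandwich
    (L : ℕ) (hL : 0 < L) (a b : ℕ → ℝ)
    (ha0 : a 0 = -1) (hbL : b (L - 1) = 1)
    (hab : ∀ ℓ < L, a ℓ < b ℓ)
    (hgap : ∀ ℓ, ℓ + 1 < L → b ℓ < a (ℓ + 1))
    (w : ℝ → ℝ)
    (hw : ContinuousOn w (⋃ ℓ ∈ Finset.range L, Set.Icc (a ℓ) (b ℓ)))
    (hwpos : ∀ x ∈ ⋃ ℓ ∈ Finset.range L, Set.Icc (a ℓ) (b ℓ), 0 < w x)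
    (N : ℕ) (hN : 1 ≤ N) (d : ℕ) (hd : N ≤ d)
    (V : Polynomial ℝ) (hVmonic : V.Monic) (hVdeg : V.natDegree = N)
    (hVmin : ∀ Q : Polynomial ℝ, Q.Monic → Q.natDegree = N →
      ersatz L N d a b w V ≤ ersatz L N d a b w Q)
    (U : Polynomial ℝ) (hUmonic : U.Monic) (hUdeg : U.natDegree = N)
    (hUmin : ∀ Q : Polynomial ℝ, Q.Monic → Q.natDegree = N →
      L1K L a b w U ≤ L1K L a b w Q) :
    ersatz L N d a b w V ≤ L1K L a b w U ∧ L1K L a b w U ≤ L1K L a b w V := by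
  constructor
  · exact le_trans (hVmin U hUmonic hUdeg)
      (ersatz_le_L1K L a b hab w hw hwpos N d U hUdeg.le)
  · exact hUmin V hVmonic hVdeg
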